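/- The terms of the sequence generated by the recurrence x_{n+2k+1} x_n = x_{n+2k} x_{n+1} + x_{n+k} + x_{n+k+1} with all initial values x_0 = x_1 = ... = x_{2k} = 1 satisfy the linear relation x_{n+6k} - (2k^2 + 8k + 4)(x_{n+4k} - x_{n+2k}) - x_n = 0 for all n ≥ 0. (One may take k = 1, i.e. the recurrence x_{n+3} x_n = x_{n+2} x_{n+1} + x_{n+1} + x_{n+2} with x_0 = x_1 = x_2 = 1, in which case the relation is x_{n+6} - 14(x_{n+4} - x_{n+2}) - x_n = 0.) -/
import Mathlib


theorem heiho_ones_linear (k : ℕ) (hk : 0 < k) (x : ℕ → ℚ)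
    (hinit : ∀ j ≤ 2 * k, x j = 1)
    (hnz : ∀ n, x n ≠ 0)
    (hrec : ∀ n, x (n + 2 * k + 1) * x n =
      x (n + 2 * k) * x (n + 1) + x (n + k) + x (n + k + 1)) :
    ∀ n, x (n + 6 * k) - (2 * (k : ℚ) ^ 2 + 8 * k + 4) * (x (n + 4 * k) - x (n + 2 * k))
      - x n = 0 := by
  -- abbreviation for the constant
  set K : ℚ := (k : ℚ) with hK
  -- Segment B : x (2k+i) = 2i+1 for i ≤ k
  have segB : ∀ i, i ≤ k → x (2 * k + i) = 2 * (i : ℚ) + 1 := by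
    intro i
    induction i with
    | zero =>
      intro _
      have := hinit (2 * k) le_rfl
      simpa using this
    | succ i ihi =>
      intro h
      have hi : i ≤ k := by omega
      have hr := hrec i
      rw [show i + 2 * k + 1 = 2 * k + (i + 1) by omega,
          show i + 2 * k = 2 * k + i by omega] at hr
      rw [hinit i (by omega), hinit (i + 1) (by omega), hinit (i + k) (by omega),
          hinit (i + k + 1) (by omega), ihi hi] at hr
      push_cast at hr ⊢
      linear_combination hr
  -- Segment C : x (3k+i) = 2i²+2i+2k+1
  have segC : ∀ i, i ≤ k → x (3 * k + i) = 2 * (i : ℚ) ^ 2 + 2 * i + 2 * K + 1 := by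
    intro i
    induction i with
    | zero =>
      intro _
      rw [show 3 * k + 0 = 2 * k + k by omega, segB k le_rfl]
      push_cast
      ring
    | succ i ihi =>
      intro h
      have hi : i ≤ k := by omega
      have hr := hrec (k + i)
      rw [show k + i + 2 * k + 1 = 3 * k + (i + 1) by omega,
          show k + i + 2 * k = 3 * k + i by omega,
          show k + i + k + 1 = 2 * k + (i + 1) by omega,
          show k + i + k = 2 * k + i by omega] at hr
      rw [hinit (k + i) (by omega), hinit (k + i + 1) (by omega),
          segB i hi, segB (i + 1) h, ihi hi] at hr
      push_cast at hr ⊢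
      linear_combination hr
  -- Segment D : x (4k+i) = 2i² + (4k²+12k+6)i + 2k²+4k+1
  have segD : ∀ i, i ≤ k → x (4 * k + i) =
      2 * (i : ℚ) ^ 2 + (4 * K ^ 2 + 12 * K + 6) * i + 2 * K ^ 2 + 4 * K + 1 := by
    intro i
    induction i with
    | zero =>
      intro _
      rw [show 4 * k + 0 = 3 * k + k by omega, segC k le_rfl]
      push_cast
      ring
    | succ i ihi =>
      intro h
      have hi : i ≤ k := by omega
      have hr := hrec (2 * k + i)
      rw [show 2 * k + i + 2 * k + 1 = 4 * k + (i + 1) by omega,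
          show 2 * k + i + 2 * k = 4 * k + i by omega,
          show 2 * k + i + k + 1 = 3 * k + (i + 1) by omega,
          show 2 * k + i + k = 3 * k + i by omega,
          show 2 * k + i + 1 = 2 * k + (i + 1) by omega] at hr
      rw [segB i hi, segB (i + 1) h, segC i hi, segC (i + 1) h, ihi hi] at hr
      have hne : (2 * (i : ℚ) + 1) ≠ 0 := by positivity
      refine mul_right_cancel₀ hne ?_
      push_cast at hr ⊢
      linear_combination hr
  -- Segment E : x (5k+i)
  have segE : ∀ i, i ≤ k → x (5 * k + i) =
      (4 * K ^ 2 + 16 * K + 8) * (i : ℚ) ^ 2 + (4 * K ^ 2 + 16 * K + 6) * i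
        + 4 * K ^ 3 + 16 * K ^ 2 + 10 * K + 1 := by
    intro i
    induction i with
    | zero =>
      intro _
      rw [show 5 * k + 0 = 4 * k + k by omega, segD k le_rfl]
      push_cast
      ring
    | succ i ihi =>
      intro h
      have hi : i ≤ k := by omega
      have hr := hrec (3 * k + i)
      rw [show 3 * k + i + 2 * k + 1 = 5 * k + (i + 1) by omega,
          show 3 * k + i + 2 * k = 5 * k + i by omega,
          show 3 * k + i + k + 1 = 4 * k + (i + 1) by omega,
          show 3 * k + i + k = 4 * k + i by omega,
          show 3 * k + i + 1 = 3 * k + (i + 1) by omega] at hr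
      rw [segC i hi, segC (i + 1) h, segD i hi, segD (i + 1) h, ihi hi] at hr
      have hkpos : (0 : ℚ) < K := by
        rw [hK]; exact_mod_cast hk
      have hne : (2 * (i : ℚ) ^ 2 + 2 * i + 2 * K + 1) ≠ 0 := by positivity
      refine mul_right_cancel₀ hne ?_
      push_cast at hr ⊢
      linear_combination hr
  -- Segment F : x (6k+i)
  have segF : ∀ i, i ≤ k → x (6 * k + i) =
      (4 * K ^ 2 + 16 * K + 8) * (i : ℚ) ^ 2
        + (8 * K ^ 4 + 56 * K ^ 3 + 120 * K ^ 2 + 80 * K + 16) * i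
        + 4 * K ^ 4 + 24 * K ^ 3 + 40 * K ^ 2 + 16 * K + 1 := by
    intro i
    induction i with
    | zero =>
      intro _
      rw [show 6 * k + 0 = 5 * k + k by omega, segE k le_rfl]
      push_cast
      ring
    | succ i ihi =>
      intro h
      have hi : i ≤ k := by omega
      have hr := hrec (4 * k + i)
      rw [show 4 * k + i + 2 * k + 1 = 6 * k + (i + 1) by omega,
          show 4 * k + i + 2 * k = 6 * k + i by omega,
          show 4 * k + i + k + 1 = 5 * k + (i + 1) by omega,
          show 4 * k + i + k = 5 * k + i by omega,
          show 4 * k + i + 1 = 4 * k + (i + 1) by omega] at hr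
      rw [segD i hi, segD (i + 1) h, segE i hi, segE (i + 1) h, ihi hi] at hr
      have hkpos : (0 : ℚ) < K := by
        rw [hK]; exact_mod_cast hk
      have hne : (2 * (i : ℚ) ^ 2 + (4 * K ^ 2 + 12 * K + 6) * i
          + 2 * K ^ 2 + 4 * K + 1) ≠ 0 := by positivity
      refine mul_right_cancel₀ hne ?_
      push_cast at hr ⊢
      linear_combination hr
  -- Segment G : x (7k+i)
  have segG : ∀ i, i ≤ k → x (7 * k + i) =
      (8 * K ^ 4 + 64 * K ^ 3 + 156 * K ^ 2 + 112 * K + 24) * (i : ℚ) ^ 2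
        + (8 * K ^ 4 + 64 * K ^ 3 + 152 * K ^ 2 + 96 * K + 16) * i
        + 8 * K ^ 5 + 64 * K ^ 4 + 160 * K ^ 3 + 128 * K ^ 2 + 32 * K + 1 := by
    intro i
    induction i with
    | zero =>
      intro _
      rw [show 7 * k + 0 = 6 * k + k by omega, segF k le_rfl]
      push_cast
      ring
    | succ i ihi =>
      intro h
      have hi : i ≤ k := by omega
      have hr := hrec (5 * k + i)
      rw [show 5 * k + i + 2 * k + 1 = 7 * k + (i + 1) by omega,
          show 5 * k + i + 2 * k = 7 * k + i by omega,
          show 5 * k + i + k + 1 = 6 * k + (i + 1) by omega,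
          show 5 * k + i + k = 6 * k + i by omega,
          show 5 * k + i + 1 = 5 * k + (i + 1) by omega] at hr
      rw [segE i hi, segE (i + 1) h, segF i hi, segF (i + 1) h, ihi hi] at hr
      have hkpos : (0 : ℚ) < K := by
        rw [hK]; exact_mod_cast hk
      have hne : ((4 * K ^ 2 + 16 * K + 8) * (i : ℚ) ^ 2 + (4 * K ^ 2 + 16 * K + 6) * i
          + 4 * K ^ 3 + 16 * K ^ 2 + 10 * K + 1) ≠ 0 := by positivity
      refine mul_right_cancel₀ hne ?_
      push_cast at hr ⊢
      linear_combination hr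
  -- base cases of the main induction
  have base : ∀ n, n ≤ 2 * k →
      x (n + 6 * k) = (2 * K ^ 2 + 8 * K + 4) * (x (n + 4 * k) - x (n + 2 * k)) + x n := by
    intro n hn
    rcases le_or_gt n k with h | h
    · rw [show n + 6 * k = 6 * k + n by omega, show n + 4 * k = 4 * k + n by omega,
          show n + 2 * k = 2 * k + n by omega,
          segF n h, segD n h, segB n h, hinit n (by omega)]
      ring
    · obtain ⟨i, rfl⟩ : ∃ i, n = k + i := ⟨n - k, by omega⟩
      have hi : i ≤ k := by omega
      rw [show k + i + 6 * k = 7 * k + i by omega, show k + i + 4 * k = 5 * k + i by omega,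
          show k + i + 2 * k = 3 * k + i by omega,
          segG i hi, segE i hi, segC i hi, hinit (k + i) (by omega)]
      ring
  -- main claim by strong induction
  have key : ∀ n, x (n + 6 * k) =
      (2 * K ^ 2 + 8 * K + 4) * (x (n + 4 * k) - x (n + 2 * k)) + x n := by
    intro n
    induction n using Nat.strong_induction_on with
    | _ n ih =>
      rcases le_or_gt n (2 * k) with hn | hn
      · exact base n hn
      · obtain ⟨j, rfl⟩ : ∃ j, n = j + 2 * k + 1 := ⟨n - (2 * k + 1), by omega⟩
        -- recurrence instances
        have hr1 := hrec (j + 6 * k)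
        rw [show j + 6 * k + 2 * k + 1 = j + 8 * k + 1 by omega,
            show j + 6 * k + 2 * k = j + 8 * k by omega,
            show j + 6 * k + k + 1 = j + 7 * k + 1 by omega,
            show j + 6 * k + k = j + 7 * k by omega] at hr1
        have hr2 := hrec (j + 2 * k)
        rw [show j + 2 * k + 2 * k + 1 = j + 4 * k + 1 by omega,
            show j + 2 * k + 2 * k = j + 4 * k by omega,
            show j + 2 * k + k + 1 = j + 3 * k + 1 by omega,
            show j + 2 * k + k = j + 3 * k by omega] at hr2
        have hr3 := hrec (j + 4 * k)
        rw [show j + 4 * k + 2 * k + 1 = j + 6 * k + 1 by omega,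
            show j + 4 * k + 2 * k = j + 6 * k by omega,
            show j + 4 * k + k + 1 = j + 5 * k + 1 by omega,
            show j + 4 * k + k = j + 5 * k by omega] at hr3
        have hr4 := hrec j
        -- induction hypotheses
        have IH1 := ih (j + 2 * k) (by omega)
        rw [show j + 2 * k + 6 * k = j + 8 * k by omega,
            show j + 2 * k + 4 * k = j + 6 * k by omega,
            show j + 2 * k + 2 * k = j + 4 * k by omega] at IH1
        have IH2 := ih (j + k) (by omega)
        rw [show j + k + 6 * k = j + 7 * k by omega,
            show j + k + 4 * k = j + 5 * k by omega,
            show j + k + 2 * k = j + 3 * k by omega] at IH2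
        have IH3 := ih (j + k + 1) (by omega)
        rw [show j + k + 1 + 6 * k = j + 7 * k + 1 by omega,
            show j + k + 1 + 4 * k = j + 5 * k + 1 by omega,
            show j + k + 1 + 2 * k = j + 3 * k + 1 by omega] at IH3
        have IH4 := ih j (by omega)
        have IH5 := ih (j + 1) (by omega)
        rw [show j + 1 + 6 * k = j + 6 * k + 1 by omega,
            show j + 1 + 4 * k = j + 4 * k + 1 by omega,
            show j + 1 + 2 * k = j + 2 * k + 1 by omega] at IH5
        rw [show j + 2 * k + 1 + 6 * k = j + 8 * k + 1 by omega,
            show j + 2 * k + 1 + 4 * k = j + 6 * k + 1 by omega,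
            show j + 2 * k + 1 + 2 * k = j + 4 * k + 1 by omega]
        have hA : x (j + 6 * k) ≠ 0 := hnz (j + 6 * k)
        refine mul_right_cancel₀ hA ?_
        linear_combination hr1 + x (j + 6 * k + 1) * IH1 + IH2 + IH3
          - (2 * K ^ 2 + 8 * K + 4) * hr3 + (2 * K ^ 2 + 8 * K + 4) * hr2 - hr4
          - x (j + 2 * k + 1) * IH4 + x (j + 2 * k) * IH5
  intro n
  have := key n
  linear_combination this
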